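/- Let T > 1, α ∈ (0,1) and λ₂ ∈ (0,1) be real numbers, write L = |log λ₂| and A = 2·log(T)·(1−α)/α, and for ρ ∈ (0,1) define k_ρ = ( (√A + √(A + 8·L·|log(1−ρ)|)) / (2L) )². Then there exists ρ ∈ (0,1) such that k_ρ/ρ ≤ 8·( α·L + (1−α)·log T ) / ( α·L² ). -/

import Mathlib

/-- Let `T > 1`, `α ∈ (0,1)` and `λ₂ ∈ (0,1)`, write `L = |log λ₂|` and
`A = 2·log T·(1−α)/α`, and for `ρ ∈ (0,1)` define
`k_ρ = ((√A + √(A + 8·L·|log(1−ρ)|))/(2L))²`.  Then there exists `ρ ∈ (0,1)` such that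
`k_ρ/ρ ≤ 8·(α·L + (1−α)·log T)/(α·L²)`. -/
theorem mixing_rate_bound (T α lam₂ L A : ℝ) (hT : 1 < T) (hα : α ∈ Set.Ioo (0 : ℝ) 1)
    (hlam : lam₂ ∈ Set.Ioo (0 : ℝ) 1) (hL : L = |Real.log lam₂|)
    (hA : A = 2 * Real.log T * (1 - α) / α) :
    ∃ ρ ∈ Set.Ioo (0 : ℝ) 1,
      ((Real.sqrt A + Real.sqrt (A + 8 * L * |Real.log (1 - ρ)|)) / (2 * L)) ^ 2 / ρ
        ≤ 8 * (α * L + (1 - α) * Real.log T) / (α * L ^ 2) := by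
  obtain ⟨hα0, hα1⟩ := hα
  obtain ⟨hl0, hl1⟩ := hlam
  have hlogT : 0 < Real.log T := Real.log_pos hT
  have hL0 : 0 < L := by
    rw [hL, abs_pos]
    exact ne_of_lt (Real.log_neg hl0 hl1)
  have h1α : 0 < 1 - α := by linarith
  set a := 2 * α * L / ((1 - α) * Real.log T) with ha
  have ha0 : 0 < a := by positivity
  have hρ0 : (0:ℝ) < 1 / (1 + a) := by positivity
  have hρ1 : 1 / (1 + a) < 1 := by
    rw [div_lt_one (by linarith)]; linarith
  refine ⟨1 / (1 + a), ⟨hρ0, hρ1⟩, ?_⟩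
  have h1a : (0:ℝ) < 1 + a := by linarith
  have h1ρ : 1 - 1 / (1 + a) = a / (1 + a) := by field_simp; ring
  have hA0 : 0 ≤ A := by rw [hA]; positivity
  -- bound on |log(1-ρ)|
  have hlogabs : |Real.log (1 - 1 / (1 + a))| ≤ 1 / a := by
    rw [h1ρ]
    have hfrac0 : 0 < a / (1 + a) := by positivity
    have hfrac1 : a / (1 + a) ≤ 1 := by
      rw [div_le_one h1a]; linarith
    have hlogle : Real.log (a / (1 + a)) ≤ 0 := Real.log_nonpos (le_of_lt hfrac0) hfrac1
    rw [abs_of_nonpos hlogle, ← Real.log_inv]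
    have hinv : (a / (1 + a))⁻¹ = 1 + 1 / a := by
      field_simp
      ring
    rw [hinv]
    have := Real.log_le_sub_one_of_pos (x := 1 + 1 / a) (by positivity)
    linarith
  set B := 8 * L * |Real.log (1 - 1 / (1 + a))| with hB
  have hB0 : 0 ≤ B := by positivity
  have hAa : A * a = 4 * L := by
    rw [hA, ha]
    field_simp
    ring
  have hB2A : B ≤ 2 * A := by
    have : B ≤ 8 * L * (1 / a) := by
      apply mul_le_mul_of_nonneg_left hlogabs (by positivity)
    have h8L : 8 * L * (1 / a) = 2 * A := by
      field_simp
      nlinarith [hAa]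
    linarith [this, h8L.le]
  have hAB0 : 0 ≤ A + B := by linarith
  have hsq : (Real.sqrt A + Real.sqrt (A + B)) ^ 2 ≤ 8 * A := by
    nlinarith [Real.sq_sqrt hA0, Real.sq_sqrt hAB0, Real.sqrt_nonneg A,
      Real.sqrt_nonneg (A + B), sq_nonneg (Real.sqrt A - Real.sqrt (A + B)), hB2A]
  -- rewrite the division by ρ
  have hLHS : ((Real.sqrt A + Real.sqrt (A + B)) / (2 * L)) ^ 2 / (1 / (1 + a))
      = (Real.sqrt A + Real.sqrt (A + B)) ^ 2 * (1 + a) / (4 * L ^ 2) := by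
    rw [one_div, div_inv_eq_mul]
    ring
  rw [hLHS]
  have hAα : A * α = 2 * Real.log T * (1 - α) := by
    rw [hA]; field_simp
  calc (Real.sqrt A + Real.sqrt (A + B)) ^ 2 * (1 + a) / (4 * L ^ 2)
      ≤ 8 * A * (1 + a) / (4 * L ^ 2) := by gcongr
    _ ≤ 8 * (α * L + (1 - α) * Real.log T) / (α * L ^ 2) := by
        rw [div_le_div_iff₀ (by positivity) (by positivity)]
        have key : 8 * A * (1 + a) * (α * L ^ 2)
            = 16 * Real.log T * (1 - α) * L ^ 2 + 32 * α * L * L ^ 2 := by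
          have h : 8 * A * (1 + a) * (α * L ^ 2)
              = 8 * (A * α) * L ^ 2 + 8 * α * (A * a) * L ^ 2 := by ring
          rw [h, hAα, hAa]; ring
        nlinarith [key, mul_nonneg (mul_nonneg h1α.le hlogT.le) (sq_nonneg L)]
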